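/- Let (L,[·,·],α) be a Hom-Lie algebra over a field of characteristic zero, with α injective (nondegenerate). Consider the current Hom-Lie algebra L ⊗ tK[t]/(tⁿ) with bracket [x⊗a, y⊗b] = [x,y]⊗ab and twist α⊗id. Then the map D = α ⊗ t(d/dt), sending x⊗tⁱ ↦ i·α(x)⊗tⁱ, is an injective (α⊗id)-derivation of L ⊗ tK[t]/(tⁿ): D([u,v]) = [D(u),(α⊗id)(v)] + [(α⊗id)(u),D(v)] for all u,v, and D commutes with α⊗id. -/

import Mathlib

variable {K L : Type*} [Field K] [AddCommGroup L] [Module K L]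

/-- The bracket of the current Hom-Lie algebra `L ⊗ tK[t]/(tⁿ)`, where an element
is recorded by its coefficients `f : ℕ → L` (the coefficient of `tᵈ` being `f d`,
with `f 0 = 0` and `f d = 0` for `d ≥ n`): `[x⊗a, y⊗b] = [x,y] ⊗ ab`. -/
def curBr (br : L →ₗ[K] L →ₗ[K] L) (n : ℕ) (f g : ℕ → L) : ℕ → L :=
  fun d => if d < n then ∑ p ∈ Finset.HasAntidiagonal.antidiagonal d, br (f p.1) (g p.2) else 0

/-- The twist `α ⊗ id` of the current Hom-Lie algebra. -/
def curTw (α : L →ₗ[K] L) (f : ℕ → L) : ℕ → L := fun d => α (f d)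

/-- The map `D = α ⊗ t(d/dt)`, sending `x ⊗ tⁱ` to `i·α(x) ⊗ tⁱ`. -/
def curD (α : L →ₗ[K] L) (f : ℕ → L) : ℕ → L := fun d => d • α (f d)

/-- Membership in `L ⊗ tK[t]/(tⁿ)`: coefficients vanish in degree `0` and in
degrees `≥ n`. -/
def curSupp (n : ℕ) (f : ℕ → L) : Prop := f 0 = 0 ∧ ∀ d, n ≤ d → f d = 0

/-- For a multiplicative Hom-Lie algebra `L` over a field of characteristic zero
with injective twist `α`, the map `D = α ⊗ t(d/dt)` is an injective
`(α⊗id)`-derivation of the current Hom-Lie algebra `L ⊗ tK[t]/(tⁿ)`, commuting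
with the twist `α ⊗ id`. -/
theorem stmt19 [CharZero K] (br : L →ₗ[K] L →ₗ[K] L) (α : L →ₗ[K] L)
    (hanti : ∀ x y : L, br y x = - br x y)
    (hjac : ∀ x y z : L,
      br (br x y) (α z) + br (br z x) (α y) + br (br y z) (α x) = 0)
    (hmult : ∀ x y : L, α (br x y) = br (α x) (α y))
    (hinj : Function.Injective α) (n : ℕ) :
    (∀ f g : ℕ → L, curSupp n f → curSupp n g →
      curD α (curBr br n f g)
        = curBr br n (curD α f) (curTw α g) + curBr br n (curTw α f) (curD α g)) ∧
    (∀ f : ℕ → L, curD α (curTw α f) = curTw α (curD α f)) ∧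
    (∀ f : ℕ → L, curSupp n f → curD α f = 0 → f = 0) := by
  refine ⟨?_, ?_, ?_⟩
  · intro f g _ _
    funext d
    simp only [curD, curBr, curTw, Pi.add_apply]
    by_cases hd : d < n
    · simp only [if_pos hd, map_sum, Finset.smul_sum, ← Finset.sum_add_distrib]
      refine Finset.sum_congr rfl fun p hp => ?_
      rw [Finset.HasAntidiagonal.mem_antidiagonal] at hp
      rw [hmult, map_nsmul, LinearMap.smul_apply, map_nsmul, ← hp, add_nsmul]
    · simp [if_neg hd]
  · intro f; funext d; simp [curD, curTw, map_nsmul]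
  · intro f hf hD
    funext d
    rcases Nat.eq_zero_or_pos d with rfl | hd
    · exact hf.1
    · have h := congrFun hD d
      simp only [curD, Pi.zero_apply] at h
      have : α (f d) = 0 := by
        have h' : (d : K) • α (f d) = 0 := by rw [Nat.cast_smul_eq_nsmul K]; exact h
        have hdK : (d : K) ≠ 0 := Nat.cast_ne_zero.2 hd.ne'
        exact (smul_eq_zero.1 h').resolve_left hdK
      exact hinj (by simpa using this)
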